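/- Let B be the 5-element band presented by generators a, b with relations a² = a, b² = b, aba = a, bab = b, together with an identity 1. Then the integral semigroup algebra ℤB is isomorphic to ℤQ/(αβ), where Q is the quiver with two vertices 0̂, 1̂ and arrows α: 1̂ → 0̂ and β: 0̂ → 1̂, and (αβ) is the two-sided ideal generated by the path αβ (the loop at 1̂ of length 2). -/

import Mathlib

/-! A concrete model of the path algebra of a quiver `V` over `k`, realized inside the
matrix algebra over the monoid algebra of the free monoid on the arrows: a path
`p : s → ⋯ → t` corresponds to the matrix whose `(s,t)` entry is the word of arrows of
`p` and whose other entries vanish.  Matrix multiplication implements concatenation of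
composable paths and kills non-composable products, so the span of these elements is a
subalgebra with the paths as a `k`-basis: the path algebra `kQ`. -/

/-- The arrows of a quiver, bundled with their endpoints. -/
abbrev QArrow (V : Type*) [Quiver V] := Σ i j : V, i ⟶ j

/-- `IsPath s t l` says that the list of arrows `l` is a directed path from `s` to `t`. -/
def IsPath {V : Type*} [Quiver V] : V → V → List (QArrow V) → Prop
  | s, t, [] => s = t
  | s, t, e :: l => e.1 = s ∧ IsPath e.2.1 t l

theorem IsPath.append {V : Type*} [Quiver V] {s t u : V} {l m : List (QArrow V)}
    (h1 : IsPath s t l) (h2 : IsPath t u m) : IsPath s u (l ++ m) := by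
  induction l generalizing s with
  | nil => cases h1; exact h2
  | cons e l ih => exact ⟨h1.1, ih h1.2⟩

/-- The element of the ambient matrix algebra corresponding to the path from `s` to `t`
with list of arrows `l`. -/
noncomputable def pathElt (k : Type*) [CommRing k] {V : Type*} [Quiver V] [DecidableEq V]
    (s t : V) (l : List (QArrow V)) :
    Matrix V V (MonoidAlgebra k (FreeMonoid (QArrow V))) :=
  Matrix.single s t (MonoidAlgebra.single (FreeMonoid.ofList l) 1)

theorem pathElt_mul (k : Type*) [CommRing k] {V : Type*} [Quiver V] [Fintype V]
    [DecidableEq V] (s t s' t' : V) (l l' : List (QArrow V)) :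
    pathElt k s t l * pathElt k s' t' l' =
      if t = s' then pathElt k s t' (l ++ l') else 0 := by
  unfold pathElt
  split
  · subst ‹t = s'›
    rw [Matrix.single_mul_single_same, MonoidAlgebra.single_mul_single, one_mul]
    rfl
  · exact Matrix.single_mul_single_of_ne (MonoidAlgebra.single (FreeMonoid.ofList l) 1) s _ _
      ‹t ≠ s'› (MonoidAlgebra.single (FreeMonoid.ofList l') 1)

theorem one_eq_sum_pathElt (k : Type*) [CommRing k] (V : Type*) [Quiver V] [Fintype V]
    [DecidableEq V] :
    (1 : Matrix V V (MonoidAlgebra k (FreeMonoid (QArrow V)))) = ∑ v : V, pathElt k v v [] := by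
  ext i j
  by_cases h : i = j
  · subst h
    simp [pathElt, Matrix.sum_apply, Matrix.single, Matrix.of_apply, Matrix.one_apply,
      MonoidAlgebra.one_def, Finset.sum_ite_eq]
  · have : ∀ x : V, (if x = i ∧ x = j then (MonoidAlgebra.single 1 1 :
        MonoidAlgebra k (FreeMonoid (QArrow V))) else 0) = 0 := by
      intro x
      rw [if_neg]
      rintro ⟨rfl, rfl⟩; exact h rfl
    simp [pathElt, Matrix.sum_apply, Matrix.single, Matrix.of_apply, Matrix.one_apply, h,
      MonoidAlgebra.one_def, this]

/-- The path algebra `kQ` of the quiver `V` over `k`, as a subalgebra of the ambient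
matrix algebra: the `k`-span of the path elements. -/
noncomputable def PathAlg (k : Type*) [CommRing k] (V : Type*) [Quiver V] [Fintype V]
    [DecidableEq V] : Subalgebra k (Matrix V V (MonoidAlgebra k (FreeMonoid (QArrow V)))) :=
  Submodule.toSubalgebra
    (Submodule.span k {m : Matrix V V (MonoidAlgebra k (FreeMonoid (QArrow V))) |
      ∃ s t l, IsPath s t l ∧ m = pathElt k s t l})
    (by
      rw [one_eq_sum_pathElt]
      exact Submodule.sum_mem _ fun v _ => Submodule.subset_span ⟨v, v, [], rfl, rfl⟩)
    (by
      intro x y hx hy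
      have hle : Submodule.span k {m : Matrix V V (MonoidAlgebra k (FreeMonoid (QArrow V))) |
          ∃ s t l, IsPath s t l ∧ m = pathElt k s t l} *
          Submodule.span k {m : Matrix V V (MonoidAlgebra k (FreeMonoid (QArrow V))) |
          ∃ s t l, IsPath s t l ∧ m = pathElt k s t l} ≤
          Submodule.span k {m : Matrix V V (MonoidAlgebra k (FreeMonoid (QArrow V))) |
          ∃ s t l, IsPath s t l ∧ m = pathElt k s t l} := by
        rw [Submodule.span_mul_span, Submodule.span_le]
        rintro z ⟨p, hp, q, hq, rfl⟩
        obtain ⟨s, t, l, hl, rfl⟩ := hp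
        obtain ⟨s', t', l', hl', rfl⟩ := hq
        show pathElt k s t l * pathElt k s' t' l' ∈ _
        rw [pathElt_mul]
        split
        · rename_i h
          subst h
          exact Submodule.subset_span ⟨s, t', l ++ l', hl.append hl', rfl⟩
        · exact Submodule.zero_mem _
      exact hle (Submodule.mul_mem_mul hx hy))

/-- The arrow ideal `J_k` of the path algebra: the two-sided ideal generated
(equivalently, `k`-spanned) by the paths of positive length. -/
noncomputable def arrowIdeal (k : Type*) [CommRing k] (V : Type*) [Quiver V] [Fintype V]
    [DecidableEq V] : TwoSidedIdeal (PathAlg k V) :=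
  TwoSidedIdeal.span {p : PathAlg k V | ∃ s t l, l ≠ [] ∧ IsPath s t l ∧
    (p : Matrix V V (MonoidAlgebra k (FreeMonoid (QArrow V)))) = pathElt k s t l}

/-- The `5`-element band `B = {1, a, b, ab, ba}` presented by
`⟨a, b ∣ a² = a, b² = b, aba = a, bab = b⟩` together with an identity. -/
inductive B5 : Type
  | one | a | b | ab | ba
deriving DecidableEq

instance : Fintype B5 :=
  ⟨{B5.one, B5.a, B5.b, B5.ab, B5.ba}, fun x => by cases x <;> simp⟩

/-- Multiplication table of `B5`, determined by the relations
`a² = a`, `b² = b`, `aba = a`, `bab = b`. -/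
def B5.mul : B5 → B5 → B5
  | B5.one, y => y
  | x, B5.one => x
  | B5.a, B5.a => B5.a
  | B5.a, B5.b => B5.ab
  | B5.a, B5.ab => B5.ab
  | B5.a, B5.ba => B5.a
  | B5.b, B5.a => B5.ba
  | B5.b, B5.b => B5.b
  | B5.b, B5.ab => B5.b
  | B5.b, B5.ba => B5.ba
  | B5.ab, B5.a => B5.a
  | B5.ab, B5.b => B5.ab
  | B5.ab, B5.ab => B5.ab
  | B5.ab, B5.ba => B5.a
  | B5.ba, B5.a => B5.ba
  | B5.ba, B5.b => B5.b
  | B5.ba, B5.ab => B5.b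
  | B5.ba, B5.ba => B5.ba

instance : Monoid B5 where
  mul := B5.mul
  one := B5.one
  mul_assoc := by decide
  one_mul := by decide
  mul_one := by decide

/-- The quiver with two vertices `0̂ = false`, `1̂ = true` and a single arrow in each
direction: `α : 1̂ → 0̂` and `β : 0̂ → 1̂`. -/
instance quiverBool : Quiver Bool := ⟨fun i j => PLift (i ≠ j)⟩

/-- The arrow `α : 1̂ → 0̂`. -/
def arrα : QArrow Bool := ⟨true, false, PLift.up (by simp)⟩

/-- The arrow `β : 0̂ → 1̂`. -/
def arrβ : QArrow Bool := ⟨false, true, PLift.up (by simp)⟩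

/-- `B5` is a band and satisfies the defining relations of the presentation. -/
theorem B5_band_relations :
    (∀ x : B5, x * x = x) ∧ B5.a * B5.b = B5.ab ∧ B5.b * B5.a = B5.ba ∧
      B5.a * B5.b * B5.a = B5.a ∧ B5.b * B5.a * B5.b = B5.b ∧
      (∀ x : B5, x = B5.one ∨ x = B5.a ∨ x = B5.b ∨ x = B5.a * B5.b ∨ x = B5.b * B5.a) := by
  decide

/-! ### Auxiliary development for the main theorem -/

set_option maxHeartbeats 1000000
set_option synthInstance.maxHeartbeats 400000

noncomputable section FiveBandProof

open MonoidAlgebra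

@[simp] lemma B5_mul_def (x y : B5) : x * y = B5.mul x y := rfl
@[simp] lemma B5_one_def : (1 : B5) = B5.one := rfl

abbrev Rb : Type := MonoidAlgebra ℤ B5
abbrev Fm : Type := MonoidAlgebra ℤ (FreeMonoid (QArrow Bool))

def sB (g : B5) : Rb := MonoidAlgebra.single g 1

lemma sB_mul (g h : B5) : sB g * sB h = sB (B5.mul g h) := by
  simp [sB, MonoidAlgebra.single_mul_single]

lemma sB_one : sB B5.one = 1 := rfl

def xx : Rb := sB .ab - sB .a
def yy : Rb := sB .ba - sB .a
def pp : Bool → Rb := fun s => if s then sB .a else 1 - sB .a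

lemma pp_mul_pp (s t : Bool) : pp s * pp t = if s = t then pp s else 0 := by
  cases s <;> cases t <;>
    simp [pp, mul_sub, sub_mul, sB_mul, B5.mul] <;> abel

/-- image of an arrow in `ℤB5` -/
def gg (e : QArrow Bool) : Rb := if e.1 then xx else yy

lemma gg_left (e : QArrow Bool) : pp e.1 * gg e = gg e := by
  obtain ⟨i, j, h⟩ := e
  cases i <;>
    simp [gg, pp, xx, yy, mul_sub, sub_mul, sB_mul, B5.mul] <;> abel

lemma gg_right (e : QArrow Bool) : gg e * pp e.2.1 = gg e := by
  obtain ⟨i, j, h⟩ := e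
  have hij : i ≠ j := h.down
  cases i <;> cases j <;> first
  | exact absurd rfl hij
  | simp [gg, pp, xx, yy, mul_sub, sub_mul, sB_mul, B5.mul] <;> abel

def ψ0 : Fm →+* Rb :=
  MonoidAlgebra.liftNCRingHom (Int.castRingHom Rb) (FreeMonoid.lift gg)
    (fun z x => Int.cast_commute z _)

lemma ψ0_single (l : List (QArrow Bool)) :
    ψ0 (MonoidAlgebra.single (FreeMonoid.ofList l) 1) = (l.map gg).prod := by
  simp [ψ0, MonoidAlgebra.liftNCRingHom, MonoidAlgebra.liftNC_single,
    FreeMonoid.lift_ofList]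

/-- the sandwiching map on the full matrix algebra -/
def Ψf (m : Matrix Bool Bool Fm) : Rb :=
  ∑ s : Bool, ∑ t : Bool, pp s * ψ0 (m s t) * pp t

lemma Ψf_add (m m' : Matrix Bool Bool Fm) : Ψf (m + m') = Ψf m + Ψf m' := by
  simp [Ψf, mul_add, add_mul, Finset.sum_add_distrib]

lemma Ψf_zero : Ψf 0 = 0 := by simp [Ψf]

lemma Ψf_zsmul (c : ℤ) (m : Matrix Bool Bool Fm) : Ψf (c • m) = c • Ψf m := by
  simp only [Ψf, Matrix.smul_apply, map_zsmul, mul_smul_comm, smul_mul_assoc,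
    Finset.smul_sum]

lemma pp_idem (t : Bool) : pp t * pp t = pp t := by rw [pp_mul_pp, if_pos rfl]

lemma Ψf_pathElt (s t : Bool) (l : List (QArrow Bool)) :
    Ψf (pathElt ℤ s t l) = pp s * (l.map gg).prod * pp t := by
  classical
  simp only [Ψf, pathElt, Fintype.sum_bool]
  cases s <;> cases t <;>
    simp [Matrix.single, ψ0_single, map_zero, mul_zero, zero_mul]

lemma pp_prod_of_ne_nil (s t : Bool) (l : List (QArrow Bool)) (h : IsPath s t l)
    (hne : l ≠ []) : pp s * (l.map gg).prod = (l.map gg).prod := by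
  cases l with
  | nil => exact absurd rfl hne
  | cons e l =>
    obtain ⟨h1, h2⟩ := h
    subst h1
    rw [List.map_cons, List.prod_cons, ← mul_assoc, gg_left]

lemma Ψf_core (s t s' t' : Bool) (l l' : List (QArrow Bool))
    (h : IsPath s t l) (h' : IsPath s' t' l') :
    Ψf (pathElt ℤ s t l * pathElt ℤ s' t' l') =
      (pp s * (l.map gg).prod * pp t) * (pp s' * (l'.map gg).prod * pp t') := by
  rw [pathElt_mul]
  split
  · rename_i hts
    subst hts
    rw [Ψf_pathElt, List.map_append, List.prod_append]
    rcases eq_or_ne l' [] with rfl | hne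
    · cases h'
      have e1 : (pp s * (l.map gg).prod * pp t) * (pp t * (List.map gg []).prod * pp t) =
          pp s * (l.map gg).prod * (pp t * (pp t * pp t)) := by
        simp only [List.map_nil, List.prod_nil, mul_one]; noncomm_ring
      rw [e1]
      simp only [pp_idem, List.map_nil, List.prod_nil, mul_one, mul_assoc]
    · have key : pp t * (l'.map gg).prod = (l'.map gg).prod :=
        pp_prod_of_ne_nil t t' l' h' hne
      have e1 : (pp s * (l.map gg).prod * pp t) * (pp t * (l'.map gg).prod * pp t') =
          pp s * (l.map gg).prod * ((pp t * pp t) * (l'.map gg).prod) * pp t' := by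
        noncomm_ring
      rw [e1, pp_idem, key]
      noncomm_ring
  · rename_i hts
    rw [Ψf_zero]
    have hz : pp t * pp s' = 0 := by rw [pp_mul_pp, if_neg hts]
    have e1 : (pp s * (l.map gg).prod * pp t) * (pp s' * (l'.map gg).prod * pp t') =
        pp s * (l.map gg).prod * (pp t * pp s') * ((l'.map gg).prod * pp t') := by
      noncomm_ring
    rw [e1, hz, mul_zero, zero_mul]

/-- the generating set of the path algebra -/
def PSet5 : Set (Matrix Bool Bool Fm) :=
  {m | ∃ s t l, IsPath s t l ∧ m = pathElt ℤ s t l}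

lemma pathAlg_eq_span :
    (PathAlg ℤ Bool).toSubmodule = Submodule.span ℤ PSet5 := rfl

lemma mem_span_of_mem_pathAlg {u : Matrix Bool Bool Fm} (h : u ∈ PathAlg ℤ Bool) :
    u ∈ Submodule.span ℤ PSet5 := h

lemma Ψf_mul_of_mem {u v : Matrix Bool Bool Fm}
    (hu : u ∈ Submodule.span ℤ PSet5) (hv : v ∈ Submodule.span ℤ PSet5) :
    Ψf (u * v) = Ψf u * Ψf v := by
  induction hu, hv using Submodule.span_induction₂ with
  | mem_mem x y hx hy =>
    obtain ⟨s, t, l, hl, rfl⟩ := hx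
    obtain ⟨s', t', l', hl', rfl⟩ := hy
    rw [Ψf_core s t s' t' l l' hl hl', Ψf_pathElt, Ψf_pathElt]
  | zero_left y hy => simp [Ψf_zero]
  | zero_right x hx => simp [Ψf_zero]
  | add_left x y z hx hy hz h1 h2 => rw [add_mul, Ψf_add, Ψf_add, add_mul, h1, h2]
  | add_right x y z hx hy hz h1 h2 => rw [mul_add, Ψf_add, Ψf_add, mul_add, h1, h2]
  | smul_left r x y hx hy h1 => rw [smul_mul_assoc, Ψf_zsmul, Ψf_zsmul, smul_mul_assoc, h1]
  | smul_right r x y hx hy h1 => rw [mul_smul_comm, Ψf_zsmul, Ψf_zsmul, mul_smul_comm, h1]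

lemma Ψf_one : Ψf 1 = 1 := by
  rw [one_eq_sum_pathElt ℤ Bool, Fintype.sum_bool, Ψf_add, Ψf_pathElt, Ψf_pathElt]
  simp only [List.map_nil, List.prod_nil, mul_one, pp_idem]
  simp [pp]

/-- the ring hom from the path algebra to `ℤB5` -/
def Ψr : PathAlg ℤ Bool →+* Rb where
  toFun u := Ψf u.1
  map_one' := Ψf_one
  map_mul' u v := Ψf_mul_of_mem u.2 v.2
  map_zero' := Ψf_zero
  map_add' u v := Ψf_add u.1 v.1

/-! ### The quotient and the forward map -/

lemma mem_pathAlg_of_isPath {s t : Bool} {l : List (QArrow Bool)} (h : IsPath s t l) :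
    pathElt ℤ s t l ∈ PathAlg ℤ Bool :=
  Submodule.subset_span ⟨s, t, l, h, rfl⟩

/-- bundled path element of the path algebra -/
def PE (s t : Bool) (l : List (QArrow Bool)) (h : IsPath s t l) : PathAlg ℤ Bool :=
  ⟨pathElt ℤ s t l, mem_pathAlg_of_isPath h⟩

lemma PE_mul_eq {s t t' : Bool} {l l' : List (QArrow Bool)}
    (h : IsPath s t l) (h' : IsPath t t' l') :
    PE s t l h * PE t t' l' h' = PE s t' (l ++ l') (h.append h') := by
  apply Subtype.ext
  show pathElt ℤ s t l * pathElt ℤ t t' l' = pathElt ℤ s t' (l ++ l')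
  rw [pathElt_mul, if_pos rfl]

lemma PE_mul_ne {s t s' t' : Bool} {l l' : List (QArrow Bool)}
    (h : IsPath s t l) (h' : IsPath s' t' l') (hne : t ≠ s') :
    PE s t l h * PE s' t' l' h' = 0 := by
  apply Subtype.ext
  show pathElt ℤ s t l * pathElt ℤ s' t' l' = 0
  rw [pathElt_mul, if_neg hne]

lemma isPath_nil (s : Bool) : IsPath s s ([] : List (QArrow Bool)) := rfl
lemma isPath_α : IsPath true false [arrα] := ⟨rfl, rfl⟩
lemma isPath_β : IsPath false true [arrβ] := ⟨rfl, rfl⟩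
lemma isPath_βα : IsPath false false [arrβ, arrα] := ⟨rfl, rfl, rfl⟩
lemma isPath_αβ : IsPath true true [arrα, arrβ] := ⟨rfl, rfl, rfl⟩

def E0v : PathAlg ℤ Bool := PE false false [] (isPath_nil false)
def E1v : PathAlg ℤ Bool := PE true true [] (isPath_nil true)
def Alv : PathAlg ℤ Bool := PE true false [arrα] isPath_α
def Bev : PathAlg ℤ Bool := PE false true [arrβ] isPath_β
def Wv : PathAlg ℤ Bool := PE false false [arrβ, arrα] isPath_βα
def Gv : PathAlg ℤ Bool := PE true true [arrα, arrβ] isPath_αβ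

/-- the ideal's generating set, as written in the statement -/
def SIdeal : Set (PathAlg ℤ Bool) :=
  {p : PathAlg ℤ Bool | (p : Matrix Bool Bool
      (MonoidAlgebra ℤ (FreeMonoid (QArrow Bool)))) = pathElt ℤ true true [arrα, arrβ]}

abbrev cQ : RingCon (PathAlg ℤ Bool) := (TwoSidedIdeal.span SIdeal).ringCon

abbrev Aq : Type := cQ.Quotient

def πq : PathAlg ℤ Bool →+* Aq := RingCon.mk' cQ

lemma πq_G : πq Gv = 0 := by
  have hmem : Gv ∈ TwoSidedIdeal.span SIdeal :=
    TwoSidedIdeal.subset_span rfl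
  have h0 : cQ Gv 0 := (TwoSidedIdeal.mem_iff _ _).mp hmem
  calc πq Gv = πq 0 := cQ.eq.mpr h0
    _ = 0 := map_zero πq

lemma q11 : πq E1v * πq E1v = πq E1v := by
  rw [← map_mul, E1v, PE_mul_eq]
  rfl
lemma q1A : πq E1v * πq Alv = πq Alv := by
  rw [← map_mul, E1v, Alv, PE_mul_eq]
  rfl
lemma q1B : πq E1v * πq Bev = 0 := by
  rw [← map_mul, E1v, Bev, PE_mul_ne _ _ (by decide), map_zero]
lemma q1W : πq E1v * πq Wv = 0 := by
  rw [← map_mul, E1v, Wv, PE_mul_ne _ _ (by decide), map_zero]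
lemma qA1 : πq Alv * πq E1v = 0 := by
  rw [← map_mul, E1v, Alv, PE_mul_ne _ _ (by decide), map_zero]
lemma qAA : πq Alv * πq Alv = 0 := by
  rw [← map_mul, Alv, PE_mul_ne _ _ (by decide), map_zero]
lemma qAB : πq Alv * πq Bev = 0 := by
  rw [← map_mul, Alv, Bev, PE_mul_eq]
  exact πq_G
lemma qAW : πq Alv * πq Wv = 0 := by
  rw [← map_mul, Alv, Wv, PE_mul_eq]
  have : Gv * Alv = PE true false ([arrα, arrβ] ++ [arrα]) (isPath_αβ.append isPath_α) :=
    PE_mul_eq _ _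
  rw [show PE true false ([arrα] ++ [arrβ, arrα]) (isPath_α.append isPath_βα) =
      Gv * Alv from (PE_mul_eq _ _).symm ▸ this.symm]
  rw [map_mul, πq_G, zero_mul]
lemma qB1 : πq Bev * πq E1v = πq Bev := by
  rw [← map_mul, E1v, Bev, PE_mul_eq]
  rfl
lemma qBA : πq Bev * πq Alv = πq Wv := by
  rw [← map_mul, Bev, Alv, Wv, PE_mul_eq]
  rfl
lemma qBB : πq Bev * πq Bev = 0 := by
  rw [← map_mul, Bev, PE_mul_ne _ _ (by decide), map_zero]
lemma qBW : πq Bev * πq Wv = 0 := by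
  rw [← map_mul, Bev, Wv, PE_mul_ne _ _ (by decide), map_zero]
lemma qW1 : πq Wv * πq E1v = 0 := by
  rw [← map_mul, E1v, Wv, PE_mul_ne _ _ (by decide), map_zero]
lemma qWA : πq Wv * πq Alv = 0 := by
  rw [← map_mul, Wv, Alv, PE_mul_ne _ _ (by decide), map_zero]
lemma qWB : πq Wv * πq Bev = 0 := by
  rw [← map_mul, Wv, Bev, PE_mul_eq]
  have h1 : Bev * Gv = PE false true ([arrβ] ++ [arrα, arrβ]) (isPath_β.append isPath_αβ) :=
    PE_mul_eq _ _
  rw [show PE false true ([arrβ, arrα] ++ [arrβ]) (isPath_βα.append isPath_β) =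
      Bev * Gv from h1.symm]
  rw [map_mul, πq_G, mul_zero]
lemma qWW : πq Wv * πq Wv = 0 := by
  rw [← map_mul, Wv, PE_mul_eq]
  have h1 : Bev * Gv = PE false true ([arrβ] ++ [arrα, arrβ]) (isPath_β.append isPath_αβ) :=
    PE_mul_eq _ _
  have h2 : (Bev * Gv) * Alv =
      PE false false (([arrβ] ++ [arrα, arrβ]) ++ [arrα])
        ((isPath_β.append isPath_αβ).append isPath_α) := by
    rw [h1]; exact PE_mul_eq _ _
  rw [show PE false false ([arrβ, arrα] ++ [arrβ, arrα]) (isPath_βα.append isPath_βα) =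
      (Bev * Gv) * Alv from h2.symm]
  rw [map_mul, map_mul, πq_G, mul_zero, zero_mul]

/-- images of the band elements in the path algebra -/
def mB : B5 → PathAlg ℤ Bool
  | .one => 1
  | .a => E1v
  | .b => E1v + Alv + Bev + Wv
  | .ab => E1v + Alv
  | .ba => E1v + Bev

lemma key_mul (u v : B5) : πq (mB u) * πq (mB v) = πq (mB (u * v)) := by
  cases u <;> cases v <;>
    · simp only [B5_mul_def, B5.mul, mB, map_add, map_one, add_mul, mul_add, one_mul,
        mul_one, q11, q1A, q1B, q1W, qA1, qAA, qAB, qAW, qB1, qBA, qBB, qBW, qW1, qWA,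
        qWB, qWW, add_zero, zero_add]
      try abel

/-- the band mapped into the quotient, as a monoid hom -/
def fB : B5 →* Aq where
  toFun g := πq (mB g)
  map_one' := map_one πq
  map_mul' := fun u v => (key_mul u v).symm

/-- the forward ring hom -/
def Φr : Rb →+* Aq :=
  MonoidAlgebra.liftNCRingHom (Int.castRingHom Aq) fB (fun z g => Int.cast_commute z _)

lemma Φr_single (g : B5) : Φr (MonoidAlgebra.single g 1) = πq (mB g) := by
  simp [Φr, MonoidAlgebra.liftNCRingHom, MonoidAlgebra.liftNC_single, fB]
  rfl

/-! ### The inverse map on the quotient -/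

lemma xx_yy : xx * yy = 0 := by
  simp only [xx, yy, mul_sub, sub_mul, sB_mul, B5.mul]
  abel

lemma Ψr_vanish : ∀ p ∈ SIdeal, p ∈ TwoSidedIdeal.ker Ψr := by
  intro p hp
  rw [TwoSidedIdeal.mem_ker]
  show Ψf p.1 = 0
  rw [show p.1 = pathElt ℤ true true [arrα, arrβ] from hp, Ψf_pathElt]
  have : ([arrα, arrβ].map gg).prod = xx * (yy * 1) := rfl
  rw [this, mul_one, xx_yy, mul_zero, zero_mul]

lemma Ψr_ker (u v : PathAlg ℤ Bool) (h : cQ u v) : Ψr u = Ψr v := by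
  have h1 : u - v ∈ TwoSidedIdeal.span SIdeal := (TwoSidedIdeal.rel_iff _ u v).mp h
  have h2 : u - v ∈ TwoSidedIdeal.ker Ψr :=
    (TwoSidedIdeal.mem_span_iff.mp h1) (TwoSidedIdeal.ker Ψr) Ψr_vanish
  rw [TwoSidedIdeal.mem_ker, map_sub, sub_eq_zero] at h2
  exact h2

def Ψbar : Aq →+* Rb where
  toFun := Quotient.lift (fun u => Ψr u) Ψr_ker
  map_one' := map_one Ψr
  map_mul' x y := Quotient.inductionOn₂ x y fun u v => map_mul Ψr u v
  map_zero' := map_zero Ψr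
  map_add' x y := Quotient.inductionOn₂ x y fun u v => map_add Ψr u v

lemma Ψbar_πq (u : PathAlg ℤ Bool) : Ψbar (πq u) = Ψr u := rfl

/-! ### Computation of `Ψr` on the basic elements -/

lemma Ψr_E1 : Ψr E1v = sB .a := by
  show Ψf (pathElt ℤ true true []) = sB .a
  rw [Ψf_pathElt]
  show sB .a * 1 * sB .a = sB .a
  rw [mul_one, sB_mul]
  rfl

lemma Ψr_Al : Ψr Alv = xx := by
  show Ψf (pathElt ℤ true false [arrα]) = xx
  rw [Ψf_pathElt, show ([arrα].map gg).prod = xx * 1 from rfl, mul_one]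
  show sB .a * xx * (1 - sB .a) = xx
  simp only [xx, mul_sub, sub_mul, mul_one, sB_mul, B5.mul]
  abel

lemma Ψr_Be : Ψr Bev = yy := by
  show Ψf (pathElt ℤ false true [arrβ]) = yy
  rw [Ψf_pathElt, show ([arrβ].map gg).prod = yy * 1 from rfl, mul_one]
  show (1 - sB .a) * yy * sB .a = yy
  simp only [yy, mul_sub, sub_mul, mul_one, one_mul, sB_mul, B5.mul]
  abel

lemma Ψr_W : Ψr Wv = sB .b - sB .ab - sB .ba + sB .a := by
  show Ψf (pathElt ℤ false false [arrβ, arrα]) = _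
  rw [Ψf_pathElt, show ([arrβ, arrα].map gg).prod = yy * (xx * 1) from rfl, mul_one]
  show (1 - sB .a) * (yy * xx) * (1 - sB .a) = _
  simp only [yy, xx, mul_sub, sub_mul, mul_one, one_mul, mul_add, add_mul, sB_mul, B5.mul]
  abel

lemma left_inv_single (g : B5) :
    Ψbar (Φr (MonoidAlgebra.single g 1)) = MonoidAlgebra.single g 1 := by
  rw [Φr_single]
  show Ψr (mB g) = MonoidAlgebra.single g 1
  cases g with
  | one => exact map_one Ψr
  | a => exact Ψr_E1
  | b =>
    rw [mB, map_add, map_add, map_add, Ψr_E1, Ψr_Al, Ψr_Be, Ψr_W]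
    show sB .a + (sB .ab - sB .a) + (sB .ba - sB .a) + (sB .b - sB .ab - sB .ba + sB .a)
      = sB .b
    abel
  | ab =>
    rw [mB, map_add, Ψr_E1, Ψr_Al]
    show sB .a + (sB .ab - sB .a) = sB .ab
    abel
  | ba =>
    rw [mB, map_add, Ψr_E1, Ψr_Be]
    show sB .a + (sB .ba - sB .a) = sB .ba
    abel

lemma hleft : ∀ r : Rb, Ψbar (Φr r) = r := by
  have h : Ψbar.comp Φr = RingHom.id Rb := by
    apply MonoidAlgebra.ringHom_ext
    · intro b
      have hb : MonoidAlgebra.single (1 : B5) b = b • (1 : Rb) := by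
        rw [MonoidAlgebra.one_def, MonoidAlgebra.smul_single]
        simp
      rw [hb, map_zsmul, map_zsmul, map_one, map_one]
    · intro g
      exact left_inv_single g
  intro r
  exact RingHom.congr_fun h r

lemma Φr_sB (g : B5) : Φr (sB g) = πq (mB g) := Φr_single g

/-! ### The other composition -/

def PPE : Bool → PathAlg ℤ Bool := fun s => if s then E1v else E0v

lemma PPE_eq (s : Bool) : PPE s = PE s s [] (isPath_nil s) := by
  cases s <;> rfl

def arrPE : QArrow Bool → PathAlg ℤ Bool := fun e => if e.1 then Alv else Bev

lemma isPath_single (e : QArrow Bool) : IsPath e.1 e.2.1 [e] := ⟨rfl, rfl⟩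

lemma arrPE_eq (e : QArrow Bool) : arrPE e = PE e.1 e.2.1 [e] (isPath_single e) := by
  obtain ⟨i, j, h⟩ := e
  have hij : i ≠ j := h.down
  cases i <;> cases j <;> first
  | exact absurd rfl hij
  | rfl

lemma sandwich : ∀ (l : List (QArrow Bool)) (s t : Bool) (hl : IsPath s t l),
    PPE s * (l.map arrPE).prod * PPE t = PE s t l hl := by
  intro l
  induction l with
  | nil =>
    intro s t hl
    cases hl
    rw [List.map_nil, List.prod_nil, mul_one, PPE_eq]
    exact PE_mul_eq _ _
  | cons e l ih =>
    intro s t hl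
    obtain ⟨h1, h2⟩ := hl
    subst h1
    rw [List.map_cons, List.prod_cons, arrPE_eq]
    have hstep1 : PPE e.1 * PE e.1 e.2.1 [e] (isPath_single e) =
        PE e.1 e.2.1 [e] (isPath_single e) := by
      rw [PPE_eq]; exact PE_mul_eq _ _
    have habs : PE e.1 e.2.1 [e] (isPath_single e) * PPE e.2.1 =
        PE e.1 e.2.1 [e] (isPath_single e) := by
      rw [PPE_eq]; exact PE_mul_eq _ _
    calc PPE e.1 * (PE e.1 e.2.1 [e] (isPath_single e) * (l.map arrPE).prod) * PPE t
        = (PPE e.1 * PE e.1 e.2.1 [e] (isPath_single e)) *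
            ((l.map arrPE).prod * PPE t) := by noncomm_ring
      _ = PE e.1 e.2.1 [e] (isPath_single e) *
            (PPE e.2.1 * ((l.map arrPE).prod * PPE t)) := by
          rw [hstep1]
          conv_rhs => rw [← mul_assoc, habs]
      _ = PE e.1 e.2.1 [e] (isPath_single e) *
            (PPE e.2.1 * (l.map arrPE).prod * PPE t) := by rw [mul_assoc (PPE e.2.1)]
      _ = PE e.1 e.2.1 [e] (isPath_single e) * PE e.2.1 t l h2 := by rw [ih e.2.1 t h2]
      _ = PE e.1 t (e :: l) ⟨rfl, h2⟩ := PE_mul_eq _ _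

lemma one_PathAlg : (1 : PathAlg ℤ Bool) = E1v + E0v := by
  apply Subtype.ext
  show (1 : Matrix Bool Bool Fm) = _
  rw [one_eq_sum_pathElt ℤ Bool, Fintype.sum_bool]
  rfl

lemma Φr_pp (s : Bool) : Φr (pp s) = πq (PPE s) := by
  cases s
  · show Φr (1 - sB .a) = πq E0v
    rw [map_sub, map_one, Φr_sB]
    show 1 - πq E1v = πq E0v
    rw [show (1 : Aq) = πq 1 from (map_one πq).symm, one_PathAlg, map_add]
    abel
  · exact Φr_single B5.a

lemma Φr_gg (e : QArrow Bool) : Φr (gg e) = πq (arrPE e) := by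
  obtain ⟨i, j, h⟩ := e
  have hij : i ≠ j := h.down
  cases i <;> cases j
  · exact absurd rfl hij
  · show Φr yy = πq Bev
    rw [yy, map_sub, Φr_sB, Φr_sB]
    show πq (E1v + Bev) - πq E1v = πq Bev
    rw [map_add]; abel
  · show Φr xx = πq Alv
    rw [xx, map_sub, Φr_sB, Φr_sB]
    show πq (E1v + Alv) - πq E1v = πq Alv
    rw [map_add]; abel
  · exact absurd rfl hij

lemma Φr_prod (l : List (QArrow Bool)) :
    Φr (l.map gg).prod = πq (l.map arrPE).prod := by
  induction l with
  | nil => rw [List.map_nil, List.map_nil, List.prod_nil, List.prod_nil, map_one, map_one]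
  | cons e l ih =>
    rw [List.map_cons, List.map_cons, List.prod_cons, List.prod_cons, map_mul, map_mul,
      Φr_gg, ih]

lemma Φbase (s t : Bool) (l : List (QArrow Bool)) (hl : IsPath s t l) :
    Φr (Ψf (pathElt ℤ s t l)) = πq (PE s t l hl) := by
  rw [Ψf_pathElt, map_mul, map_mul, Φr_pp, Φr_pp, Φr_prod, ← map_mul, ← map_mul,
    sandwich l s t hl]

lemma hright : ∀ x : Aq, Φr (Ψbar x) = x := by
  intro x
  refine Quotient.inductionOn x fun u => ?_
  show Φr (Ψr u) = πq u
  obtain ⟨mu, hu⟩ := u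
  show Φr (Ψf mu) = πq ⟨mu, hu⟩
  have hu' : mu ∈ Submodule.span ℤ PSet5 := hu
  refine Submodule.span_induction
    (p := fun m _ => ∀ h : m ∈ PathAlg ℤ Bool, Φr (Ψf m) = πq ⟨m, h⟩)
    ?_ ?_ ?_ ?_ hu' hu
  · rintro m ⟨s, t, l, hl, rfl⟩ h
    exact Φbase s t l hl
  · intro h
    rw [Ψf_zero, map_zero, show (⟨0, h⟩ : PathAlg ℤ Bool) = 0 from rfl, map_zero]
  · intro m m' hm hm' ih ih' h
    have hmp : m ∈ PathAlg ℤ Bool := hm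
    have hmp' : m' ∈ PathAlg ℤ Bool := hm'
    rw [Ψf_add, map_add, ih hmp, ih' hmp',
      show (⟨m + m', h⟩ : PathAlg ℤ Bool) = ⟨m, hmp⟩ + ⟨m', hmp'⟩ from rfl, map_add]
  · intro c m hm ih h
    have hmp : m ∈ PathAlg ℤ Bool := hm
    rw [Ψf_zsmul, map_zsmul, ih hmp,
      show (⟨c • m, h⟩ : PathAlg ℤ Bool) = c • (⟨m, hmp⟩ : PathAlg ℤ Bool) from rfl,
      map_zsmul]

end FiveBandProof

/-- `ℤB ≅ ℤQ/(αβ)`, where `B` is the `5`-element band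
`⟨a, b ∣ a² = a, b² = b, aba = a, bab = b⟩ ∪ {1}`, `Q` is the quiver with vertices
`0̂, 1̂` and arrows `α : 1̂ → 0̂`, `β : 0̂ → 1̂`, and `(αβ)` is the two-sided ideal of the
integral path algebra `ℤQ` generated by the length-two loop at `1̂` composed of `α`
followed by `β`. -/
theorem fiveElementBand_integral_presentation :
    Nonempty (MonoidAlgebra ℤ B5 ≃+*
      (TwoSidedIdeal.ringCon (TwoSidedIdeal.span
        {p : PathAlg ℤ Bool | (p : Matrix Bool Bool
            (MonoidAlgebra ℤ (FreeMonoid (QArrow Bool)))) =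
          pathElt ℤ true true [arrα, arrβ]})).Quotient) := by
  exact ⟨⟨⟨Φr, Ψbar, hleft, hright⟩, fun x y => map_mul Φr x y, fun x y => map_add Φr x y⟩⟩
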